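/- Let p > 1, and let G ∈ C²([0,T)) satisfy G''(t) ≥ A e^{-b₁(t+R)} G(t)^p for t > 0, G(0) > 0, G'(0) > 0, where A, b₁, R > 0. Then for all t ≥ 0, (1/2) G'(t)² ≥ (A/(p+1)) e^{-b₁(t+R)} (G(t)^{p+1} − G(0)^{p+1}) + (1/2) G'(0)². -/

import Mathlib

open Real

theorem stmt_1 (p A b₁ R T : ℝ) (hp : 1 < p) (hA : 0 < A) (hb : 0 < b₁) (hR : 0 < R)
    (hT : 0 < T) (G : ℝ → ℝ) (hG : ContDiff ℝ 2 G)
    (hG'' : ∀ t, 0 < t → t < T →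
      deriv (deriv G) t ≥ A * Real.exp (-b₁ * (t + R)) * G t ^ p)
    (hG0 : 0 < G 0) (hG'0 : 0 < deriv G 0) :
    ∀ t, 0 ≤ t → t < T →
      (1 / 2) * (deriv G t) ^ 2 ≥
        (A / (p + 1)) * Real.exp (-b₁ * (t + R)) * (G t ^ (p + 1) - G 0 ^ (p + 1))
          + (1 / 2) * (deriv G 0) ^ 2 := by
  have h2 : ContDiff ℝ ((1:ℕ) + 1 : ℕ) G := by exact_mod_cast hG
  have h1 : ContDiff ℝ 1 (deriv G) := (contDiff_succ_iff_deriv.mp h2).2.2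
  have hGdiff : Differentiable ℝ G := hG.differentiable two_ne_zero
  have hg_diff : Differentiable ℝ (deriv G) := h1.differentiable one_ne_zero
  have hg'cont : Continuous (deriv (deriv G)) := h1.continuous_deriv le_rfl
  -- Step 1: deriv G stays positive on [0, T)
  have key : ∀ t, 0 ≤ t → t < T → ∀ s, 0 ≤ s → s ≤ t → 0 < deriv G s := by
    intro t ht0 htT
    by_contra h
    push_neg at h
    obtain ⟨s₁, hs₁0, hs₁t, hs₁⟩ := h
    set B : Set ℝ := Set.Icc 0 t ∩ {s | deriv G s ≤ 0} with hBdef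
    have hBne : B.Nonempty := ⟨s₁, ⟨hs₁0, hs₁t⟩, hs₁⟩
    have hBclosed : IsClosed B :=
      isClosed_Icc.inter (isClosed_le hg_diff.continuous continuous_const)
    have hBbdd : BddBelow B := ⟨0, fun x hx => hx.1.1⟩
    set t₀ := sInf B with ht₀def
    have ht₀B : t₀ ∈ B := hBclosed.csInf_mem hBne hBbdd
    have ht₀0 : 0 < t₀ := by
      rcases lt_or_eq_of_le ht₀B.1.1 with h' | h'
      · exact h'
      · exfalso; have := ht₀B.2; rw [← h'] at this; exact absurd hG'0 (not_lt.mpr this)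
    have hpos : ∀ s, 0 ≤ s → s < t₀ → 0 < deriv G s := by
      intro s hs0 hst₀
      by_contra hc
      push_neg at hc
      have : s ∈ B := ⟨⟨hs0, le_trans hst₀.le ht₀B.1.2⟩, hc⟩
      exact absurd (csInf_le hBbdd this) (not_le.mpr hst₀)
    have hGmono : StrictMonoOn G (Set.Icc 0 t₀) := by
      apply strictMonoOn_of_deriv_pos (convex_Icc 0 t₀) hGdiff.continuous.continuousOn
      intro x hx
      rw [interior_Icc] at hx
      exact hpos x hx.1.le hx.2
    have hGpos : ∀ s ∈ Set.Icc 0 t₀, 0 < G s := by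
      intro s hs
      calc (0:ℝ) < G 0 := hG0
        _ ≤ G s := hGmono.monotoneOn (Set.left_mem_Icc.mpr ht₀0.le) hs hs.1
    have hgmono : StrictMonoOn (deriv G) (Set.Icc 0 t₀) := by
      apply strictMonoOn_of_deriv_pos (convex_Icc 0 t₀) hg_diff.continuous.continuousOn
      intro x hx
      rw [interior_Icc] at hx
      have hxT : x < T := lt_of_lt_of_le hx.2 (le_trans ht₀B.1.2 htT.le)
      have := hG'' x hx.1 hxT
      have hGx : 0 < G x := hGpos x ⟨hx.1.le, hx.2.le⟩
      have : 0 < A * Real.exp (-b₁ * (x + R)) * G x ^ p :=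
        mul_pos (mul_pos hA (Real.exp_pos _)) (Real.rpow_pos_of_pos hGx p)
      linarith [hG'' x hx.1 hxT]
    have : deriv G 0 < deriv G t₀ :=
      hgmono (Set.left_mem_Icc.mpr ht₀0.le) (Set.right_mem_Icc.mpr ht₀0.le) ht₀0
    have h2' : deriv G t₀ ≤ 0 := ht₀B.2
    linarith
  -- Step 2: main
  intro t ht0 htT
  have hkey := key t ht0 htT
  have hGmono : MonotoneOn G (Set.Icc 0 t) := by
    apply monotoneOn_of_deriv_nonneg (convex_Icc 0 t) hGdiff.continuous.continuousOn
      (hGdiff.differentiableOn)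
    intro x hx
    rw [interior_Icc] at hx
    exact (hkey x hx.1.le hx.2.le).le
  have hG0le : ∀ s ∈ Set.Icc 0 t, G 0 ≤ G s := fun s hs =>
    hGmono (Set.left_mem_Icc.mpr ht0) hs hs.1
  have hGpos : ∀ s ∈ Set.Icc 0 t, 0 < G s := fun s hs => lt_of_lt_of_le hG0 (hG0le s hs)
  set F : ℝ → ℝ := fun s => (1/2) * (deriv G s)^2
      - (A/(p+1)) * Real.exp (-b₁*(s+R)) * (G s ^ (p+1) - G 0 ^ (p+1)) with hFdef
  have hp1 : (0:ℝ) < p + 1 := by linarith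
  -- derivative of F at points of (0, t)
  have hFderiv : ∀ s ∈ Set.Ioo (0:ℝ) t, HasDerivAt F
      ((1/2) * (2 * deriv G s ^ 1 * deriv (deriv G) s)
        - ((A/(p+1)) * (Real.exp (-b₁*(s+R)) * (-b₁ * 1)) * (G s ^ (p+1) - G 0 ^ (p+1))
           + (A/(p+1)) * Real.exp (-b₁*(s+R)) * (deriv G s * (p+1) * G s ^ (p+1-1)))) s := by
    intro s hs
    have hGs : 0 < G s := hGpos s ⟨hs.1.le, hs.2.le⟩
    have hA1 : HasDerivAt (fun u => (1/2) * (deriv G u)^2)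
        ((1/2) * (2 * deriv G s ^ 1 * deriv (deriv G) s)) s :=
      (((hg_diff s).hasDerivAt).pow 2).const_mul (1/2)
    have hexp : HasDerivAt (fun u => Real.exp (-b₁*(u+R)))
        (Real.exp (-b₁*(s+R)) * (-b₁ * 1)) s := by
      have : HasDerivAt (fun u : ℝ => -b₁*(u+R)) (-b₁ * 1) s :=
        ((hasDerivAt_id s).add_const R).const_mul (-b₁)
      exact this.exp
    have hrpow : HasDerivAt (fun u => G u ^ (p+1) - G 0 ^ (p+1))
        (deriv G s * (p+1) * G s ^ (p+1-1)) s :=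
      (((hGdiff s).hasDerivAt).rpow_const (Or.inl (ne_of_gt hGs))).sub_const _
    have hB := ((hexp.const_mul (A/(p+1))).mul hrpow)
    have := hA1.sub hB
    convert this using 1 <;> rfl
  have hFmono : MonotoneOn F (Set.Icc 0 t) := by
    apply monotoneOn_of_deriv_nonneg (convex_Icc 0 t)
    · apply ContinuousOn.sub
      · exact (continuous_const.mul (hg_diff.continuous.pow 2)).continuousOn
      · apply ContinuousOn.mul
        · exact (Continuous.continuousOn (by continuity))
        · apply ContinuousOn.sub
          · exact ContinuousOn.rpow_const hGdiff.continuous.continuousOn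
              (fun x hx => Or.inl (ne_of_gt (hGpos x hx)))
          · exact continuousOn_const
    · intro x hx
      rw [interior_Icc] at hx
      exact (hFderiv x hx).differentiableAt.differentiableWithinAt
    · intro x hx
      rw [interior_Icc] at hx
      rw [(hFderiv x hx).deriv]
      have hGx : 0 < G x := hGpos x ⟨hx.1.le, hx.2.le⟩
      have hgx : 0 < deriv G x := hkey x hx.1.le hx.2.le
      have hg'' := hG'' x hx.1 (lt_trans hx.2 htT)
      have hΔ : 0 ≤ G x ^ (p+1) - G 0 ^ (p+1) := by
        have := Real.rpow_le_rpow hG0.le (hG0le x ⟨hx.1.le, hx.2.le⟩) hp1.le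
        linarith
      have hexp : 0 < Real.exp (-b₁*(x+R)) := Real.exp_pos _
      have hrpos : 0 < G x ^ p := Real.rpow_pos_of_pos hGx p
      rw [(by norm_num : p + 1 - 1 = p)]
      have hAp : 0 < A/(p+1) := div_pos hA hp1
      have e1 : (A/(p+1)) * Real.exp (-b₁*(x+R)) * ((p+1) * G x ^ p * deriv G x)
          = A * Real.exp (-b₁*(x+R)) * G x ^ p * deriv G x := by
        field_simp
      nlinarith [mul_le_mul_of_nonneg_left hg'' hgx.le,
        mul_nonneg (mul_nonneg (mul_nonneg hAp.le hexp.le) hb.le) hΔ]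
  have hF0 : F 0 = (1/2) * (deriv G 0)^2 := by simp [hFdef]
  have := hFmono (Set.left_mem_Icc.mpr ht0) (Set.right_mem_Icc.mpr ht0) ht0
  rw [hF0] at this
  simp only [hFdef] at this
  linarith
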